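/- Let r_i = 2^{−i} and s_j = s^{−1} 2^{−j²} with s = Σ_k 2^{−k²}. Then the Kullback–Leibler divergence Σ_i r_i log(r_i/s_i) = Σ_i 2^{−i}(log s + (i² − i) log 2) is finite, while for every α > 1 the sum Σ_i r_i^α s_i^{1−α} = s^{α−1} Σ_i 2^{(α−1)i² − α i} diverges. Hence D₁ < ∞ but D_α = ∞ for all α > 1 for these probability distributions. -/

import Mathlib

open Real Filter

lemma rpow_neg_nat_eq (n : ℕ) : (2:ℝ) ^ (-((n:ℝ))) = (2⁻¹:ℝ) ^ n := by
  rw [Real.rpow_neg (by norm_num), Real.rpow_natCast, inv_pow]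

/-- Let `r_i = 2^{−i}` and `s_i = s⁻¹ 2^{−i²}` with `s = Σ_k 2^{−k²}`
(probability distributions on the positive integers; here `i = n+1` for `n : ℕ`).
Then the Kullback–Leibler divergence `Σ_i r_i log(r_i/s_i) = Σ_i 2^{−i}(log s + (i²−i) log 2)`
is finite (the series is summable, with the stated value), while for every `α > 1`
the series `Σ_i r_i^α s_i^{1−α}` diverges. Hence `D₁ < ∞` but `D_α = ∞` for all `α > 1`. -/
theorem stmt19
    (s : ℝ) (hs : s = ∑' k : ℕ, (2 : ℝ) ^ (-(((k : ℝ) + 1) ^ 2)))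
    (r q : ℕ → ℝ)
    (hr : ∀ n, r n = (2 : ℝ) ^ (-((n : ℝ) + 1)))
    (hq : ∀ n, q n = s⁻¹ * (2 : ℝ) ^ (-(((n : ℝ) + 1) ^ 2))) :
    Summable (fun n => r n * Real.log (r n / q n)) ∧
    (∑' n, r n * Real.log (r n / q n)
      = ∑' n : ℕ, (2 : ℝ) ^ (-((n : ℝ) + 1)) *
          (Real.log s + (((n : ℝ) + 1) ^ 2 - ((n : ℝ) + 1)) * Real.log 2)) ∧
    ∀ α : ℝ, 1 < α → ¬ Summable (fun n => r n ^ α * q n ^ (1 - α)) := by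
  have h2 : (0:ℝ) < 2 := by norm_num
  have hcast : ∀ n : ℕ, ((n:ℝ) + 1) = ((n + 1 : ℕ) : ℝ) := by intro n; push_cast; ring
  have hrw : ∀ n : ℕ, (2:ℝ) ^ (-((n:ℝ) + 1)) = (2⁻¹:ℝ) ^ (n + 1) := by
    intro n
    rw [hcast n, rpow_neg_nat_eq]
  -- geometric series summable
  have hgeom : Summable (fun k : ℕ => (2:ℝ) ^ (-((k:ℝ) + 1))) := by
    have h0 : Summable (fun k : ℕ => (2⁻¹:ℝ) ^ k) :=
      summable_geometric_of_lt_one (by norm_num) (by norm_num)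
    have h1 : Summable (fun k : ℕ => (2⁻¹:ℝ) ^ (k + 1)) :=
      (summable_nat_add_iff 1).mpr h0
    exact h1.congr fun k => (hrw k).symm
  -- summability of the s-series
  have hS : Summable (fun k : ℕ => (2:ℝ) ^ (-(((k:ℝ) + 1) ^ 2))) := by
    refine Summable.of_nonneg_of_le (fun k => (Real.rpow_pos_of_pos h2 _).le) (fun k => ?_) hgeom
    apply Real.rpow_le_rpow_of_exponent_le (by norm_num)
    have : (0:ℝ) ≤ (k:ℝ) := Nat.cast_nonneg k
    nlinarith
  have hs_pos : 0 < s := by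
    rw [hs]
    exact Summable.tsum_pos hS (fun i => (Real.rpow_pos_of_pos h2 _).le) 0 (Real.rpow_pos_of_pos h2 _)
  -- pointwise identity for the KL terms
  have hpt : ∀ n : ℕ, r n * Real.log (r n / q n)
      = (2:ℝ) ^ (-((n:ℝ) + 1)) *
          (Real.log s + (((n:ℝ) + 1) ^ 2 - ((n:ℝ) + 1)) * Real.log 2) := by
    intro n
    rw [hr, hq]
    have hdiv : (2:ℝ) ^ (-((n:ℝ) + 1)) / (s⁻¹ * (2:ℝ) ^ (-(((n:ℝ) + 1) ^ 2)))
        = s * (2:ℝ) ^ ((((n:ℝ) + 1) ^ 2) - ((n:ℝ) + 1)) := by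
      rw [Real.rpow_sub h2, Real.rpow_neg h2.le, Real.rpow_neg h2.le]
      field_simp
    rw [hdiv, Real.log_mul hs_pos.ne' (Real.rpow_pos_of_pos h2 _).ne', Real.log_rpow h2]
  -- summability of the explicit series
  have hF : Summable (fun n : ℕ => (2:ℝ) ^ (-((n:ℝ) + 1)) *
      (Real.log s + (((n:ℝ) + 1) ^ 2 - ((n:ℝ) + 1)) * Real.log 2)) := by
    have hpow : ∀ k : ℕ, Summable (fun n : ℕ => ((n:ℝ) + 1) ^ k * (2⁻¹:ℝ) ^ (n + 1)) := by
      intro k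
      have h0 : Summable (fun n : ℕ => (n:ℝ) ^ k * (2⁻¹:ℝ) ^ n) :=
        summable_pow_mul_geometric_of_norm_lt_one k (by norm_num : ‖(2⁻¹:ℝ)‖ < 1)
      have h1 := (summable_nat_add_iff 1).mpr h0
      exact h1.congr fun n => by push_cast; ring
    have hsum : Summable (fun n : ℕ =>
        Real.log s * (2⁻¹:ℝ) ^ (n + 1)
        + (Real.log 2 * (((n:ℝ) + 1) ^ 2 * (2⁻¹:ℝ) ^ (n + 1))
            - Real.log 2 * (((n:ℝ) + 1) ^ 1 * (2⁻¹:ℝ) ^ (n + 1)))) := by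
      exact (((hpow 0).congr (fun n => by ring)).mul_left (Real.log s)).add
        ((((hpow 2).mul_left (Real.log 2))).sub (((hpow 1).mul_left (Real.log 2))))
    exact hsum.congr fun n => by rw [hrw n]; ring
  refine ⟨(hF.congr fun n => (hpt n).symm), tsum_congr hpt, ?_⟩
  -- divergence for α > 1
  intro α hα hsum
  have hc : (0:ℝ) < (s⁻¹) ^ (1 - α) := Real.rpow_pos_of_pos (inv_pos.2 hs_pos) _
  have key : ∀ n : ℕ, r n ^ α * q n ^ (1 - α)
      = (s⁻¹) ^ (1 - α) *
        Real.exp (Real.log 2 * (((α - 1) * ((n:ℝ) + 1) - α) * ((n:ℝ) + 1))) := by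
    intro n
    rw [hr, hq, Real.mul_rpow (inv_nonneg.2 hs_pos.le) (Real.rpow_pos_of_pos h2 _).le,
      ← Real.rpow_mul h2.le, ← Real.rpow_mul h2.le]
    rw [mul_left_comm, ← Real.rpow_add h2, Real.rpow_def_of_pos h2]
    ring_nf
  -- the terms tend to infinity
  have h1 : Tendsto (fun n : ℕ => ((n:ℝ) + 1)) atTop atTop :=
    tendsto_atTop_add_const_right atTop 1 tendsto_natCast_atTop_atTop
  have h2' : Tendsto (fun n : ℕ => (α - 1) * ((n:ℝ) + 1) - α) atTop atTop := by
    have hm := h1.const_mul_atTop (by linarith : (0:ℝ) < α - 1)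
    simpa [sub_eq_add_neg] using tendsto_atTop_add_const_right atTop (-α) hm
  have hE : Tendsto (fun n : ℕ => ((α - 1) * ((n:ℝ) + 1) - α) * ((n:ℝ) + 1)) atTop atTop :=
    h2'.atTop_mul_atTop₀ h1
  have hE2 : Tendsto (fun n : ℕ => Real.log 2 * (((α - 1) * ((n:ℝ) + 1) - α) * ((n:ℝ) + 1)))
      atTop atTop := hE.const_mul_atTop (Real.log_pos one_lt_two)
  have htop : Tendsto (fun n : ℕ => r n ^ α * q n ^ (1 - α)) atTop atTop := by
    have := (Real.tendsto_exp_atTop.comp hE2).const_mul_atTop hc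
    exact this.congr fun n => (key n).symm
  exact not_tendsto_nhds_of_tendsto_atTop htop 0 hsum.tendsto_atTop_zero
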